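/- Let R be a TRS and (A, λ, Σ_red) a sound C-labeling for R. For all ground terms s, t with s outermost-rewriting to t, there exists m ≤ cd_A(R) such that lab(top(s)) rewrites to lab(top(t)) by one μ-step with a labeled original rule of the dynamic labeling DL(A,λ,R), followed by exactly m μ-steps with relabeling rules. Consequently, if the context-sensitive TRS DL(A,λ,R) is terminating, then R is outermost ground terminating. -/

import Mathlib

namespace TRSStmt

/-- First-order terms over a signature `F` with arity function `ar` and variables `V`. -/
inductive Tm (F : Type) (ar : F → ℕ) (V : Type) : Type
  | var : V → Tm F ar V
  | app : (f : F) → (Fin (ar f) → Tm F ar V) → Tm F ar V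

variable {F : Type} {ar : F → ℕ} {V W A : Type}

/-- Interpretation of a term in a `Σ`-algebra, given an assignment. -/
def Tm.eval (I : (f : F) → (Fin (ar f) → A) → A) (α : V → A) : Tm F ar V → A
  | .var x => α x
  | .app f ts => I f (fun i => (ts i).eval I α)

/-- Homomorphic extension of a substitution. -/
def Tm.subst (σ : V → Tm F ar W) : Tm F ar V → Tm F ar W
  | .var x => σ x
  | .app f ts => .app f (fun i => (ts i).subst σ)

/-- A variable occurs in a term. -/
def Tm.occurs (x : V) : Tm F ar V → Prop
  | .var y => y = x
  | .app _ ts => ∃ i, (ts i).occurs x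

/-- Subterm at a position (0-indexed). -/
def Tm.subAt : Tm F ar V → List ℕ → Option (Tm F ar V)
  | t, [] => some t
  | .var _, _ :: _ => none
  | .app f ts, i :: p => if h : i < ar f then (ts ⟨i, h⟩).subAt p else none

/-- Replace the subterm at a position. -/
def Tm.replaceAt : Tm F ar V → List ℕ → Tm F ar V → Option (Tm F ar V)
  | _, [], s => some s
  | .var _, _ :: _, _ => none
  | .app f ts, i :: p, s =>
      if h : i < ar f then
        ((ts ⟨i, h⟩).replaceAt p s).map (fun u => .app f (Function.update ts ⟨i, h⟩ u))
      else none

/-- The root symbol of a term (if any). -/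
def Tm.rootSym : Tm F ar V → Option F
  | .var _ => none
  | .app f _ => some f

/-- The function symbol at a position. -/
def Tm.symAt (t : Tm F ar V) (p : List ℕ) : Option F := (t.subAt p).bind Tm.rootSym

/-- A rewrite rule is a pair of terms. -/
abbrev Rule (F : Type) (ar : F → ℕ) (V : Type) := Tm F ar V × Tm F ar V

/-- A set of rules is a TRS: left-hand sides are no variables and
    right-hand side variables occur on the left. -/
def IsTRS (R : Set (Rule F ar V)) : Prop :=
  ∀ lr ∈ R, (∀ x : V, lr.1 ≠ Tm.var x) ∧ ∀ x : V, lr.2.occurs x → lr.1.occurs x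

/-- `t` is a redex with respect to `R`. -/
def IsRedex (R : Set (Rule F ar V)) (t : Tm F ar W) : Prop :=
  ∃ lr ∈ R, ∃ σ : V → Tm F ar W, t = lr.1.subst σ

/-- Rewrite step at position `p`. -/
def RewAt (R : Set (Rule F ar V)) (p : List ℕ) (t u : Tm F ar W) : Prop :=
  ∃ lr ∈ R, ∃ σ : V → Tm F ar W,
    t.subAt p = some (lr.1.subst σ) ∧ t.replaceAt p (lr.2.subst σ) = some u

/-- Outermost rewrite step at position `p`: no redex strictly above `p`. -/
def OutAt (R : Set (Rule F ar V)) (p : List ℕ) (t u : Tm F ar W) : Prop :=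
  RewAt R p t u ∧
    ∀ q, q <+: p → q ≠ p → ∀ s, t.subAt q = some s → ¬ IsRedex R s

/-- Outermost rewrite step. -/
def OStep (R : Set (Rule F ar V)) (t u : Tm F ar W) : Prop := ∃ p, OutAt R p t u

/-- μ-replacing positions for a replacement map `μ`. -/
inductive MuPos (μ : (f : F) → Fin (ar f) → Prop) : Tm F ar V → List ℕ → Prop
  | nil (t : Tm F ar V) : MuPos μ t []
  | cons (f : F) (ts : Fin (ar f) → Tm F ar V) (i : Fin (ar f)) (p : List ℕ) :
      μ f i → MuPos μ (ts i) p → MuPos μ (Tm.app f ts) (i.val :: p)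

/-- Context-sensitive (μ-)rewrite step. -/
def MuStep (R : Set (Rule F ar V)) (μ : (f : F) → Fin (ar f) → Prop)
    (t u : Tm F ar W) : Prop :=
  ∃ p, RewAt R p t u ∧ MuPos μ t p

/-- No infinite sequence for a relation (termination / strong normalization). -/
def NoInf {τ : Type _} (r : τ → τ → Prop) : Prop :=
  ¬ ∃ g : ℕ → τ, ∀ n, r (g n) (g (n + 1))

/-- One-hole contexts. -/
inductive Ctx (F : Type) (ar : F → ℕ) (V : Type) : Type
  | hole : Ctx F ar V
  | app : (f : F) → (i : Fin (ar f)) → ((j : Fin (ar f)) → j ≠ i → Tm F ar V) →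
      Ctx F ar V → Ctx F ar V

/-- Depth of the hole of a context. -/
def Ctx.depth : Ctx F ar V → ℕ
  | .hole => 0
  | .app _ _ _ C => C.depth + 1

/-- Filling the hole of a context with a term. -/
def Ctx.fill : Ctx F ar V → Tm F ar V → Tm F ar V
  | .hole, s => s
  | .app f i ts C, s => .app f (fun j => if h : j = i then C.fill s else ts j h)

/-- The rule `lr` preserves the interpretation inside every context of depth `n`. -/
def HoldsAtDepth (I : (f : F) → (Fin (ar f) → A) → A) (n : ℕ) (lr : Rule F ar V) : Prop :=
  ∀ (C : Ctx F ar V) (α : V → A), C.depth = n →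
    (C.fill lr.1).eval I α = (C.fill lr.2).eval I α

/-- `A` is a C-model for `R`. -/
def IsCModel (I : (f : F) → (Fin (ar f) → A) → A) (R : Set (Rule F ar V)) : Prop :=
  ∀ lr ∈ R, ∃ n, HoldsAtDepth I n lr

/-- `A` is a model for `R`. -/
def IsModel (I : (f : F) → (Fin (ar f) → A) → A) (R : Set (Rule F ar V)) : Prop :=
  ∀ lr ∈ R, ∀ α : V → A, lr.1.eval I α = lr.2.eval I α

section Label
variable {L : F → Type}

/-- Labeled signature: symbols with a label. -/
abbrev LSym (F : Type) (L : F → Type) := Σ f : F, L f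

/-- Arity on the labeled signature. -/
abbrev lar (ar : F → ℕ) : LSym F L → ℕ := fun g => ar g.1

/-- Semantic labeling of a term with respect to an assignment. -/
def labT (I : (f : F) → (Fin (ar f) → A) → A)
    (lf : ∀ f : F, (Fin (ar f) → A) → L f) (α : V → A) :
    Tm F ar V → Tm (LSym F L) (lar ar) V
  | .var x => .var x
  | .app f ts => .app ⟨f, lf f (fun i => (ts i).eval I α)⟩ (fun i => labT I lf α (ts i))

end Label

/-- Evaluation of ground terms. -/
def geval (I : (f : F) → (Fin (ar f) → A) → A) : Tm F ar Empty → A :=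
  Tm.eval I (fun x => x.elim)

/-- Labeling of ground terms. -/
def glab {L : F → Type} (I : (f : F) → (Fin (ar f) → A) → A)
    (lf : ∀ f : F, (Fin (ar f) → A) → L f) :
    Tm F ar Empty → Tm (LSym F L) (lar ar) Empty :=
  labT I lf (fun x => x.elim)

/-- Terms not containing the symbol `tp`. -/
def tpFree (tp : F) : Tm F ar V → Prop
  | .var _ => True
  | .app f ts => f ≠ tp ∧ ∀ i, tpFree tp (ts i)

/-- The term `top(s)`. -/
def topT (tp : F) (s : Tm F ar V) : Tm F ar V := Tm.app tp (fun _ => s)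

/-- Number of occurrences of a variable in a term. -/
def countV [DecidableEq V] (x : V) : Tm F ar V → ℕ
  | .var y => if y = x then 1 else 0
  | .app _ ts => ∑ i, countV x (ts i)

/-- Linear terms: every variable occurs at most once. -/
def Linear [DecidableEq V] (t : Tm F ar V) : Prop := ∀ x : V, countV x t ≤ 1

/-- Quasi-left-linear TRS. -/
def QuasiLeftLinear [DecidableEq V] (R : Set (Rule F ar V)) : Prop :=
  ∀ lr ∈ R, ¬ Linear lr.1 →
    ∃ lr' ∈ R, Linear lr'.1 ∧ ∃ σ : V → Tm F ar V, lr.1 = lr'.1.subst σ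

end TRSStmt

namespace TRSStmt

variable {F : Type} {ar : F → ℕ} {V A : Type} {L : F → Type}

/-- Soundness of a C-labeling `(A, λ, Σ_red)` (with top symbol `tp`):
    a ground `tp`-free term whose labeled root is a redex symbol is a redex. -/
def SoundLab (I : (f : F) → (Fin (ar f) → A) → A)
    (lf : ∀ f : F, (Fin (ar f) → A) → L f) (tp : F)
    (R : Set (Rule F ar V)) (Sred : Set (LSym F L)) : Prop :=
  ∀ t : Tm F ar Empty, tpFree tp t →
    ∀ g ∈ Sred, (glab I lf t).rootSym = some g → IsRedex R t

/-- Completeness of a C-labeling: every ground `tp`-free redex has its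
    labeled root in `Σ_red`. -/
def CompleteLab (I : (f : F) → (Fin (ar f) → A) → A)
    (lf : ∀ f : F, (Fin (ar f) → A) → L f) (tp : F)
    (R : Set (Rule F ar V)) (Sred : Set (LSym F L)) : Prop :=
  ∀ t : Tm F ar Empty, tpFree tp t → IsRedex R t →
    ∃ g ∈ Sred, (glab I lf t).rootSym = some g

/-- A core algebra (relative to the `tp`-free signature `Σ`):
    every element is the interpretation of a ground term over `Σ`. -/
def CoreAlg (I : (f : F) → (Fin (ar f) → A) → A) (tp : F) : Prop :=
  ∀ a : A, ∃ t : Tm F ar Empty, tpFree tp t ∧ geval I t = a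

/-- Prepending the flat context `f(x₁,…,□ at i,…,xₙ)` to a term. -/
def flatExt (f : F) (i : Fin (ar f)) (xs : ∀ j : Fin (ar f), j ≠ i → V)
    (t : Tm F ar V) : Tm F ar V :=
  Tm.app f (fun j => if h : j = i then t else Tm.var (xs j h))

/-- The iterated flat-context extension of rule–assignment pairs
    underlying the dynamic context extension `CE(A,λ,R)`. -/
inductive Reach (I : (f : F) → (Fin (ar f) → A) → A)
    (lf : ∀ f : F, (Fin (ar f) → A) → L f)
    (R : Set (Rule F ar V)) (Sred : Set (LSym F L)) :
    Tm F ar V → Tm F ar V → (V → A) → Prop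
  | base (l r : Tm F ar V) (α : V → A) : (l, r) ∈ R → Reach I lf R Sred l r α
  | step (l r : Tm F ar V) (α : V → A) (f : F) (i : Fin (ar f))
      (xs : ∀ j : Fin (ar f), j ≠ i → V) (α' : V → A) :
      Reach I lf R Sred l r α →
      (l.eval I α ≠ r.eval I α ∨ ∃ x, r = Tm.var x) →
      (∀ j h, ¬ l.occurs (xs j h)) →
      (∀ j h j' h', xs j h = xs j' h' → j = j') →
      (∀ x : V, l.occurs x → α' x = α x) →
      (∀ g ∈ Sred, (labT I lf α' (flatExt f i xs l)).rootSym ≠ some g) →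
      Reach I lf R Sred (flatExt f i xs l) (flatExt f i xs r) α'

/-- The rules of the dynamic context extension `CE(A,λ,R)`:
    labelings of the fully extended rule–assignment pairs. -/
def CE (I : (f : F) → (Fin (ar f) → A) → A)
    (lf : ∀ f : F, (Fin (ar f) → A) → L f)
    (R : Set (Rule F ar V)) (Sred : Set (LSym F L)) :
    Set (Rule (LSym F L) (lar ar) V) :=
  { p | ∃ (l r : Tm F ar V) (α : V → A),
      Reach I lf R Sred l r α ∧ l.eval I α = r.eval I α ∧ (∀ x : V, r ≠ Tm.var x) ∧
      p = (labT I lf α l, labT I lf α r) }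

/-- The replacement map of the transformed system:
    all arguments of redex symbols are frozen. -/
def ceMu (Sred : Set (LSym F L)) : (g : LSym F L) → Fin (lar ar g) → Prop :=
  fun g _ => g ∉ Sred

/-- Outermost ground termination of `R` over the `tp`-free signature `Σ`. -/
def OGTtp (R : Set (Rule F ar V)) (tp : F) : Prop :=
  ¬ ∃ g : ℕ → Tm F ar Empty,
      (∀ n, tpFree tp (g n)) ∧ ∀ n, OStep R (g n) (g (n + 1))

end TRSStmt

namespace TRSStmt

variable {F : Type} {ar : F → ℕ} {V A : Type} {L : F → Type}

/-- Closure generating the value-change pairs (before removing diagonal pairs). -/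
inductive VCpre (I : (f : F) → (Fin (ar f) → A) → A)
    (lf : ∀ f : F, (Fin (ar f) → A) → L f)
    (R : Set (Rule F ar V)) (Sred : Set (LSym F L)) : A → A → Prop
  | base (lr : Rule F ar V) (hlr : lr ∈ R) (α : V → A)
      (hne : lr.1.eval I α ≠ lr.2.eval I α) :
      VCpre I lf R Sred (lr.1.eval I α) (lr.2.eval I α)
  | step (b b' : A) (h : VCpre I lf R Sred b b') (f : F)
      (as : Fin (ar f) → A) (i : Fin (ar f)) (hi : as i = b)
      (hred : (⟨f, lf f as⟩ : LSym F L) ∉ Sred) :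
      VCpre I lf R Sred (I f as) (I f (Function.update as i b'))

/-- The set of value-change pairs `VC(λ,R)` (diagonal pairs removed). -/
def VC (I : (f : F) → (Fin (ar f) → A) → A)
    (lf : ∀ f : F, (Fin (ar f) → A) → L f)
    (R : Set (Rule F ar V)) (Sred : Set (LSym F L)) (b b' : A) : Prop :=
  VCpre I lf R Sred b b' ∧ b ≠ b'

/-- The relation `⤳` on value-change pairs. -/
def Lead (I : (f : F) → (Fin (ar f) → A) → A)
    (lf : ∀ f : F, (Fin (ar f) → A) → L f)
    (R : Set (Rule F ar V)) (Sred : Set (LSym F L)) (p q : A × A) : Prop :=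
  VC I lf R Sred p.1 p.2 ∧ VC I lf R Sred q.1 q.2 ∧
  ∃ (f : F) (as : Fin (ar f) → A) (i : Fin (ar f)),
    as i = p.1 ∧ (⟨f, lf f as⟩ : LSym F L) ∉ Sred ∧
    q.1 = I f as ∧ q.2 = I f (Function.update as i p.2)

end TRSStmt

namespace TRSStmt

variable {F : Type} {ar : F → ℕ} {A : Type} {L : F → Type}

/-- The signature of the dynamic labeling: labeled symbols plus the
    fresh unary relabel symbols `∇_{a,a'}`. -/
abbrev DSym (F : Type) (L : F → Type) (A : Type) := LSym F L ⊕ (A × A)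

/-- Arities for the dynamic labeling signature. -/
abbrev dar (ar : F → ℕ) : DSym F L A → ℕ := Sum.elim (lar ar) (fun _ => 1)

/-- Inclusion of labeled terms into terms over the dynamic labeling signature. -/
def embL {W : Type} : Tm (LSym F L) (lar ar) W → Tm (DSym F L A) (dar ar) W
  | .var x => .var x
  | .app g ts => .app (Sum.inl g) (fun i => embL (ts i))

/-- `∇_{b,b'}(t)`. -/
def nabla {W : Type} (b b' : A) (t : Tm (DSym F L A) (dar ar) W) :
    Tm (DSym F L A) (dar ar) W :=
  Tm.app (Sum.inr (b, b')) (fun _ => t)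

/-- The labeled original rules of the dynamic labeling `DL(A,λ,R)`. -/
def DLorg (I : (f : F) → (Fin (ar f) → A) → A)
    (lf : ∀ f : F, (Fin (ar f) → A) → L f)
    (R : Set (Rule F ar ℕ)) : Set (Rule (DSym F L A) (dar ar) ℕ) :=
  { p | ∃ lr ∈ R, ∃ α : ℕ → A,
      p.1 = embL (labT I lf α lr.1) ∧
      ((lr.1.eval I α = lr.2.eval I α ∧ p.2 = embL (labT I lf α lr.2)) ∨
       (lr.1.eval I α ≠ lr.2.eval I α ∧
         p.2 = nabla (lr.1.eval I α) (lr.2.eval I α) (embL (labT I lf α lr.2)))) }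

/-- The relabeling rules of the dynamic labeling `DL(A,λ,R)`. -/
def DLprp (I : (f : F) → (Fin (ar f) → A) → A)
    (lf : ∀ f : F, (Fin (ar f) → A) → L f)
    (R : Set (Rule F ar ℕ)) (Sred : Set (LSym F L)) :
    Set (Rule (DSym F L A) (dar ar) ℕ) :=
  { p | ∃ (f : F) (as : Fin (ar f) → A) (i : Fin (ar f)) (b b' : A),
      VC I lf R Sred b b' ∧ as i = b ∧
      (⟨f, lf f as⟩ : LSym F L) ∉ Sred ∧
      p.1 = Tm.app (Sum.inl (⟨f, lf f as⟩ : LSym F L))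
              (fun j => if j = i then nabla b b' (Tm.var (j : ℕ)) else Tm.var (j : ℕ)) ∧
      ((I f as = I f (Function.update as i b') ∧
         p.2 = Tm.app (Sum.inl (⟨f, lf f (Function.update as i b')⟩ : LSym F L))
                 (fun j => Tm.var (j : ℕ))) ∨
       (I f as ≠ I f (Function.update as i b') ∧
         p.2 = nabla (I f as) (I f (Function.update as i b'))
                 (Tm.app (Sum.inl (⟨f, lf f (Function.update as i b')⟩ : LSym F L))
                    (fun j => Tm.var (j : ℕ))))) }

/-- The replacement map of the dynamic labeling: all arguments of `∇`-symbols
    and of redex symbols are frozen. -/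
def dlMu (Sred : Set (LSym F L)) : (g : DSym F L A) → Fin (dar ar g) → Prop :=
  fun g _ => match g with
    | Sum.inl h => h ∉ Sred
    | Sum.inr _ => False

/-- `n`-fold composition of a relation. -/
def itN {τ : Type _} (r : τ → τ → Prop) : ℕ → τ → τ → Prop
  | 0 => fun a b => a = b
  | n + 1 => fun a c => ∃ b, r a b ∧ itN r n b c

end TRSStmt
namespace TRSStmt

variable {F : Type} {ar : F → ℕ} {V W U A : Type} {L : F → Type}

theorem eval_subst (I : (f : F) → (Fin (ar f) → A) → A) (α : W → A)
    (σ : V → Tm F ar W) : ∀ t : Tm F ar V,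
    (t.subst σ).eval I α = t.eval I (fun x => (σ x).eval I α)
  | .var x => rfl
  | .app f ts => by
      simp only [Tm.subst, Tm.eval]
      congr 1; funext i; exact eval_subst I α σ (ts i)

theorem subst_comp (σ : V → Tm F ar W) (τ : W → Tm F ar U) : ∀ t : Tm F ar V,
    (t.subst σ).subst τ = t.subst (fun x => (σ x).subst τ)
  | .var x => rfl
  | .app f ts => by
      simp only [Tm.subst]
      congr 1; funext i; exact subst_comp σ τ (ts i)

theorem labT_subst (I : (f : F) → (Fin (ar f) → A) → A)
    (lf : ∀ f : F, (Fin (ar f) → A) → L f) (α : W → A) (σ : V → Tm F ar W) :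
    ∀ t : Tm F ar V,
    labT I lf α (t.subst σ)
      = (labT I lf (fun x => (σ x).eval I α) t).subst (fun x => labT I lf α (σ x))
  | .var x => rfl
  | .app f ts => by
      have h1 : (fun i => Tm.eval I α (Tm.subst σ (ts i)))
          = fun i => Tm.eval I (fun x => (σ x).eval I α) (ts i) := by
        funext i; exact eval_subst I α σ (ts i)
      have h2 : (fun i => labT I lf α (Tm.subst σ (ts i)))
          = fun i => (labT I lf (fun x => (σ x).eval I α) (ts i)).subst
              (fun x => labT I lf α (σ x)) := by
        funext i; exact labT_subst I lf α σ (ts i)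
      simp only [Tm.subst, labT]
      rw [h1, h2]

theorem embL_subst (σ : V → Tm (LSym F L) (lar ar) W) :
    ∀ t : Tm (LSym F L) (lar ar) V,
    (embL (A := A) (t.subst σ)) = (embL t).subst (fun x => embL (σ x))
  | .var x => rfl
  | .app g ts => by
      simp only [Tm.subst, embL]
      congr 1; funext i; exact embL_subst σ (ts i)

theorem subAt_subst (σ : V → Tm F ar W) : ∀ (p : List ℕ) (t u : Tm F ar V),
    t.subAt p = some u → (t.subst σ).subAt p = some (u.subst σ)
  | [], t, u, h => by simp [Tm.subAt] at h ⊢; exact congrArg _ h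
  | i :: p, .var x, u, h => by simp [Tm.subAt] at h
  | i :: p, .app f ts, u, h => by
      simp only [Tm.subAt, Tm.subst] at h ⊢
      split at h
      · rename_i hi; simp only [dif_pos hi]; exact subAt_subst σ p _ u h
      · exact absurd h (by simp)

theorem replaceAt_subst (σ : V → Tm F ar W) :
    ∀ (p : List ℕ) (t w u : Tm F ar V),
    t.replaceAt p w = some u → (t.subst σ).replaceAt p (w.subst σ) = some (u.subst σ)
  | [], t, w, u, h => by
      simp only [Tm.replaceAt, Option.some.injEq] at h ⊢; exact congrArg _ h
  | i :: p, .var x, w, u, h => by simp [Tm.replaceAt] at h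
  | i :: p, .app f ts, w, u, h => by
      simp only [Tm.replaceAt, Tm.subst] at h ⊢
      split at h
      · rename_i hi
        simp only [dif_pos hi]
        rcases Option.map_eq_some_iff.1 h with ⟨v, hv, rfl⟩
        rw [replaceAt_subst σ p _ w v hv]
        simp only [Option.map_some, Option.some.injEq, Tm.subst]
        congr 1
        funext j
        by_cases hj : j = ⟨i, hi⟩
        · subst hj; simp
        · simp [Function.update_of_ne hj]
      · exact absurd h (by simp)

end TRSStmt
namespace TRSStmt

variable {F : Type} {ar : F → ℕ} {V W U A : Type} {L : F → Type}

theorem subAt_nil (t : Tm F ar V) : t.subAt [] = some t := by cases t <;> rfl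

theorem replaceAt_nil (t s : Tm F ar V) : t.replaceAt [] s = some s := by cases t <;> rfl

theorem subAt_cons (f : F) (ts : Fin (ar f) → Tm F ar V) (i : ℕ) (hi : i < ar f)
    (p : List ℕ) :
    (Tm.app f ts).subAt (i :: p) = (ts ⟨i, hi⟩).subAt p := by
  simp [Tm.subAt, dif_pos hi]

theorem replaceAt_cons (f : F) (ts : Fin (ar f) → Tm F ar V) (i : ℕ) (hi : i < ar f)
    (p : List ℕ) (s : Tm F ar V) :
    (Tm.app f ts).replaceAt (i :: p) s
      = ((ts ⟨i, hi⟩).replaceAt p s).map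
          (fun u => Tm.app f (Function.update ts ⟨i, hi⟩ u)) := by
  simp [Tm.replaceAt, dif_pos hi]

theorem glab_app (I : (f : F) → (Fin (ar f) → A) → A)
    (lf : ∀ f : F, (Fin (ar f) → A) → L f) (f : F) (ts : Fin (ar f) → Tm F ar Empty) :
    glab I lf (.app f ts)
      = .app ⟨f, lf f (fun i => geval I (ts i))⟩ (fun i => glab I lf (ts i)) := rfl

theorem geval_app (I : (f : F) → (Fin (ar f) → A) → A) (f : F)
    (ts : Fin (ar f) → Tm F ar Empty) :
    geval I (.app f ts) = I f (fun i => geval I (ts i)) := rfl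

theorem EG_app (I : (f : F) → (Fin (ar f) → A) → A)
    (lf : ∀ f : F, (Fin (ar f) → A) → L f) (f : F) (ts : Fin (ar f) → Tm F ar Empty) :
    embL (A := A) (glab I lf (.app f ts))
      = .app (Sum.inl ⟨f, lf f (fun i => geval I (ts i))⟩)
          (fun i => embL (A := A) (glab I lf (ts i))) := rfl

theorem subAt_app (f : F) (ts : Fin (ar f) → Tm F ar V) (i : ℕ) (p : List ℕ)
    (w : Tm F ar V) (h : (Tm.app f ts).subAt (i :: p) = some w) :
    ∃ hi : i < ar f, (ts ⟨i, hi⟩).subAt p = some w := by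
  simp only [Tm.subAt] at h
  split at h
  · rename_i hi; exact ⟨hi, h⟩
  · exact absurd h (by simp)

theorem replaceAt_app (f : F) (ts : Fin (ar f) → Tm F ar V) (i : ℕ) (hi : i < ar f)
    (p : List ℕ) (w t : Tm F ar V) (h : (Tm.app f ts).replaceAt (i :: p) w = some t) :
    ∃ ti, (ts ⟨i, hi⟩).replaceAt p w = some ti
      ∧ t = .app f (Function.update ts ⟨i, hi⟩ ti) := by
  simp only [Tm.replaceAt, dif_pos hi] at h
  rcases Option.map_eq_some_iff.1 h with ⟨v, hv, h2⟩
  exact ⟨v, hv, h2.symm⟩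

theorem EG_subAt (I : (f : F) → (Fin (ar f) → A) → A)
    (lf : ∀ f : F, (Fin (ar f) → A) → L f) :
    ∀ (p : List ℕ) (s w : Tm F ar Empty), s.subAt p = some w →
    (embL (A := A) (glab I lf s)).subAt p = some (embL (A := A) (glab I lf w))
  | [], s, w, h => by
      rw [subAt_nil] at h
      cases h
      exact subAt_nil _
  | i :: p, .var x, w, h => nomatch x
  | i :: p, .app f ts, w, h => by
      rcases subAt_app f ts i p w h with ⟨hi, h'⟩
      have IH := EG_subAt I lf p _ w h'
      rw [EG_app, subAt_cons (Sum.inl (⟨f, lf f fun i => geval I (ts i)⟩ : LSym F L)) (fun i => embL (A := A) (glab I lf (ts i))) i hi]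
      exact IH

theorem EG_replace_exists (I : (f : F) → (Fin (ar f) → A) → A)
    (lf : ∀ f : F, (Fin (ar f) → A) → L f) :
    ∀ (p : List ℕ) (s w : Tm F ar Empty), s.subAt p = some w →
    ∀ X : Tm (DSym F L A) (dar ar) Empty,
      ∃ Y, (embL (A := A) (glab I lf s)).replaceAt p X = some Y
  | [], s, w, h, X => ⟨X, replaceAt_nil _ _⟩
  | i :: p, .var x, w, h, X => nomatch x
  | i :: p, .app f ts, w, h, X => by
      rcases subAt_app f ts i p w h with ⟨hi, h'⟩
      rcases EG_replace_exists I lf p _ w h' X with ⟨Y, hY⟩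
      refine ⟨Tm.app (Sum.inl (⟨f, lf f fun j => geval I (ts j)⟩ : LSym F L))
        (Function.update (fun j => embL (A := A) (glab I lf (ts j))) ⟨i, hi⟩ Y), ?_⟩
      rw [EG_app, replaceAt_cons (Sum.inl (⟨f, lf f fun i => geval I (ts i)⟩ : LSym F L)) (fun i => embL (A := A) (glab I lf (ts i))) i hi]
      erw [hY, Option.map_some]

theorem geval_replace (I : (f : F) → (Fin (ar f) → A) → A) :
    ∀ (p : List ℕ) (s w w' t : Tm F ar Empty), s.subAt p = some w →
      s.replaceAt p w' = some t → geval I w = geval I w' →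
      geval I s = geval I t
  | [], s, w, w', t, h1, h2, h3 => by
      rw [subAt_nil] at h1; rw [replaceAt_nil] at h2
      cases h1; cases h2; exact h3
  | i :: p, .var x, w, w', t, h1, h2, h3 => nomatch x
  | i :: p, .app f ts, w, w', t, h1, h2, h3 => by
      rcases subAt_app f ts i p w h1 with ⟨hi, hs⟩
      rcases replaceAt_app f ts i hi p w' t h2 with ⟨ti, hr, rfl⟩
      have IH := geval_replace I p _ w w' ti hs hr h3
      simp only [geval_app]
      congr 1
      funext j
      by_cases hj : j = ⟨i, hi⟩
      · subst hj; rw [Function.update_self]; exact IH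
      · rw [Function.update_of_ne hj]

theorem EG_replace_eq (I : (f : F) → (Fin (ar f) → A) → A)
    (lf : ∀ f : F, (Fin (ar f) → A) → L f) :
    ∀ (p : List ℕ) (s w w' t : Tm F ar Empty), s.subAt p = some w →
      s.replaceAt p w' = some t → geval I w = geval I w' →
      (embL (A := A) (glab I lf s)).replaceAt p (embL (A := A) (glab I lf w'))
        = some (embL (A := A) (glab I lf t))
  | [], s, w, w', t, h1, h2, h3 => by
      rw [subAt_nil] at h1; rw [replaceAt_nil] at h2
      cases h1; cases h2; exact replaceAt_nil _ _
  | i :: p, .var x, w, w', t, h1, h2, h3 => nomatch x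
  | i :: p, .app f ts, w, w', t, h1, h2, h3 => by
      rcases subAt_app f ts i p w h1 with ⟨hi, hs⟩
      rcases replaceAt_app f ts i hi p w' t h2 with ⟨ti, hr, rfl⟩
      have IH := EG_replace_eq I lf p _ w w' ti hs hr h3
      have hval : geval I (ts ⟨i, hi⟩) = geval I ti := geval_replace I p _ w w' ti hs hr h3
      rw [EG_app, replaceAt_cons (Sum.inl (⟨f, lf f fun i => geval I (ts i)⟩ : LSym F L)) (fun i => embL (A := A) (glab I lf (ts i))) i hi]
      erw [IH, Option.map_some, Option.some.injEq]
      have lab_eq : (fun j => geval I (Function.update ts ⟨i, hi⟩ ti j))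
          = fun j => geval I (ts j) := by
        funext j
        by_cases hj : j = ⟨i, hi⟩
        · subst hj; rw [Function.update_self]; exact hval.symm
        · rw [Function.update_of_ne hj]
      have ch_eq : (fun j => embL (A := A) (glab I lf (Function.update ts ⟨i, hi⟩ ti j)))
          = Function.update (fun j => embL (A := A) (glab I lf (ts j))) ⟨i, hi⟩
              (embL (A := A) (glab I lf ti)) := by
        funext j
        by_cases hj : j = ⟨i, hi⟩
        · subst hj; rw [Function.update_self, Function.update_self]
        · rw [Function.update_of_ne hj, Function.update_of_ne hj]
      rw [EG_app, lab_eq]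
      exact congrArg (Tm.app (Sum.inl (⟨f, lf f fun j => geval I (ts j)⟩ : LSym F L))) ch_eq.symm

end TRSStmt
namespace TRSStmt

variable {F : Type} {ar : F → ℕ} {V W U A : Type} {L : F → Type}

theorem itN_snoc {τ : Type _} {r : τ → τ → Prop} :
    ∀ {m a b c}, itN r m a b → r b c → itN r (m + 1) a c := by
  intro m
  induction m with
  | zero => intro a b c h hr; cases h; exact ⟨c, hr, rfl⟩
  | succ n ih =>
      rintro a b c ⟨d, hd, hrest⟩ hr
      exact ⟨d, hd, ih hrest hr⟩

theorem itN_mono {τ : Type _} {r r' : τ → τ → Prop}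
    (hle : ∀ a b, r a b → r' a b) :
    ∀ {m a b}, itN r m a b → itN r' m a b := by
  intro m
  induction m with
  | zero => intro a b h; exact h
  | succ n ih => rintro a b ⟨c, hc, hrest⟩; exact ⟨c, hle _ _ hc, ih hrest⟩

theorem MuStep_mono {Rr Rr' : Set (Rule F ar V)} {μ : (f : F) → Fin (ar f) → Prop}
    (hsub : Rr ⊆ Rr') {a b : Tm F ar W} (h : MuStep Rr μ a b) : MuStep Rr' μ a b := by
  rcases h with ⟨p, ⟨lr, hlr, σ, h1, h2⟩, hμ⟩
  exact ⟨p, ⟨lr, hsub hlr, σ, h1, h2⟩, hμ⟩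

theorem MuStep_lift {Rr : Set (Rule F ar V)} {μ : (f : F) → Fin (ar f) → Prop}
    {a b : Tm F ar W} (h : MuStep Rr μ a b) (g : F) (ts : Fin (ar g) → Tm F ar W)
    (ι : Fin (ar g)) (hts : ts ι = a) (hμ : μ g ι) :
    MuStep Rr μ (.app g ts) (.app g (Function.update ts ι b)) := by
  rcases h with ⟨p, ⟨lr, hlr, σ, h1, h2⟩, hpos⟩
  refine ⟨ι.val :: p, ⟨lr, hlr, σ, ?_, ?_⟩, ?_⟩
  · rw [subAt_cons g ts ι.val ι.isLt, Fin.eta, hts]; exact h1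
  · rw [replaceAt_cons g ts ι.val ι.isLt, Fin.eta, hts, h2]; rfl
  · have : MuPos μ (ts ι) p := hts ▸ hpos
    exact MuPos.cons g ts ι p hμ this

theorem itN_MuStep_lift {Rr : Set (Rule F ar V)} {μ : (f : F) → Fin (ar f) → Prop} :
    ∀ {m : ℕ} {a b : Tm F ar W}, itN (MuStep Rr μ) m a b →
    ∀ (g : F) (ts : Fin (ar g) → Tm F ar W) (ι : Fin (ar g)), ts ι = a → μ g ι →
    itN (MuStep Rr μ) m (.app g ts) (.app g (Function.update ts ι b)) := by
  intro m
  induction m with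
  | zero =>
      intro a b h g ts ι hts hμ
      cases h
      show Tm.app g ts = _
      rw [← hts, Function.update_eq_self]
  | succ n ih =>
      rintro a b ⟨c, hc, hrest⟩ g ts ι hts hμ
      refine ⟨.app g (Function.update ts ι c), MuStep_lift hc g ts ι hts hμ, ?_⟩
      have := ih hrest g (Function.update ts ι c) ι (Function.update_self _ _ _) hμ
      rwa [Function.update_idem] at this

theorem MuPos_subst {μ : (f : F) → Fin (ar f) → Prop} (τ : V → Tm F ar W) :
    ∀ {t : Tm F ar V} {p : List ℕ}, MuPos μ t p → MuPos μ (t.subst τ) p := by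
  intro t p h
  induction h with
  | nil t => exact MuPos.nil _
  | cons f ts i p hμ hpos ih =>
      exact MuPos.cons f (fun j => (ts j).subst τ) i p hμ ih

theorem MuStep_subst {Rr : Set (Rule F ar V)} {μ : (f : F) → Fin (ar f) → Prop}
    {a b : Tm F ar W} (τ : W → Tm F ar U) (h : MuStep Rr μ a b) :
    MuStep Rr μ (a.subst τ) (b.subst τ) := by
  rcases h with ⟨p, ⟨lr, hlr, σ, h1, h2⟩, hpos⟩
  refine ⟨p, ⟨lr, hlr, fun x => (σ x).subst τ, ?_, ?_⟩, MuPos_subst τ hpos⟩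
  · have := subAt_subst τ p a _ h1
    rwa [subst_comp] at this
  · have := replaceAt_subst τ p a _ b h2
    rwa [subst_comp] at this

theorem nabla_subst {b b' : A} (t : Tm (DSym F L A) (dar ar) V)
    (σ : V → Tm (DSym F L A) (dar ar) W) :
    (nabla (F := F) (L := L) b b' t).subst σ = nabla b b' (t.subst σ) := rfl

theorem MuPos_EG (I : (f : F) → (Fin (ar f) → A) → A)
    (lf : ∀ f : F, (Fin (ar f) → A) → L f) (Sred : Set (LSym F L)) :
    ∀ (p : List ℕ) (s w : Tm F ar Empty), s.subAt p = some w →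
    (∀ q u, q <+: p → q ≠ p → s.subAt q = some u →
      ¬ ∃ g ∈ Sred, (glab I lf u).rootSym = some g) →
    MuPos (dlMu (A := A) (ar := ar) Sred) (embL (A := A) (glab I lf s)) p
  | [], s, w, _, _ => MuPos.nil _
  | i :: p, .var x, w, h, _ => nomatch x
  | i :: p, .app f ts, w, h, hq => by
      rcases subAt_app f ts i p w h with ⟨hi, h'⟩
      have hroot : (⟨f, lf f fun j => geval I (ts j)⟩ : LSym F L) ∉ Sred := by
        intro hmem
        exact hq [] (.app f ts) ⟨i :: p, rfl⟩ (by simp) (subAt_nil _)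
          ⟨⟨f, lf f fun j => geval I (ts j)⟩, hmem, rfl⟩
      have hq' : ∀ q u, q <+: p → q ≠ p → (ts ⟨i, hi⟩).subAt q = some u →
          ¬ ∃ g ∈ Sred, (glab I lf u).rootSym = some g := by
        intro q u hpre hne hsub
        rcases hpre with ⟨l, rfl⟩
        refine hq (i :: q) u ⟨l, rfl⟩ (by simp [hne]) ?_
        rw [subAt_cons f ts i hi]; exact hsub
      have IH := MuPos_EG I lf Sred p (ts ⟨i, hi⟩) w h' hq'
      rw [EG_app]
      have := MuPos.cons (μ := dlMu (A := A) (ar := ar) Sred)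
        (Sum.inl (⟨f, lf f fun j => geval I (ts j)⟩ : LSym F L))
        (fun j => embL (A := A) (glab I lf (ts j))) ⟨i, hi⟩ p hroot IH
      exact this

end TRSStmt
namespace TRSStmt

variable {F : Type} {ar : F → ℕ} {V W U A : Type} {L : F → Type}

theorem subAt_append : ∀ (q q' : List ℕ) (s w : Tm F ar V),
    s.subAt (q ++ q') = some w → ∃ u, s.subAt q = some u ∧ u.subAt q' = some w
  | [], q', s, w, h => ⟨s, subAt_nil s, h⟩
  | i :: q, q', .var x, w, h => by simp [Tm.subAt] at h
  | i :: q, q', .app f ts, w, h => by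
      rcases subAt_app f ts i (q ++ q') w h with ⟨hi, h'⟩
      rcases subAt_append q q' _ w h' with ⟨u, hu1, hu2⟩
      exact ⟨u, by rw [subAt_cons f ts i hi]; exact hu1, hu2⟩

theorem replaceAt_append : ∀ (q q' : List ℕ) (s u x t : Tm F ar V),
    s.subAt q = some u → s.replaceAt (q ++ q') x = some t →
    ∃ u', u.replaceAt q' x = some u' ∧ t.subAt q = some u'
  | [], q', s, u, x, t, h1, h2 => by
      rw [subAt_nil] at h1; cases h1
      exact ⟨t, h2, subAt_nil t⟩
  | i :: q, q', .var y, u, x, t, h1, h2 => by simp [Tm.subAt] at h1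
  | i :: q, q', .app f ts, u, x, t, h1, h2 => by
      rcases subAt_app f ts i q u h1 with ⟨hi, hs⟩
      rcases replaceAt_app f ts i hi (q ++ q') x t h2 with ⟨ti, hti, rfl⟩
      rcases replaceAt_append q q' _ u x ti hs hti with ⟨u', hu1, hu2⟩
      refine ⟨u', hu1, ?_⟩
      rw [subAt_cons f _ i hi, Function.update_self]
      exact hu2

theorem tpFree_subAt (tp : F) : ∀ (q : List ℕ) (s u : Tm F ar V),
    tpFree tp s → s.subAt q = some u → tpFree tp u
  | [], s, u, hf, h => by rw [subAt_nil] at h; cases h; exact hf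
  | i :: q, .var x, u, hf, h => by simp [Tm.subAt] at h
  | i :: q, .app f ts, u, hf, h => by
      rcases subAt_app f ts i q u h with ⟨hi, h'⟩
      exact tpFree_subAt tp q _ u (hf.2 ⟨i, hi⟩) h'

theorem eval_gr (I : (f : F) → (Fin (ar f) → A) → A) (t : Tm F ar Empty) (α : ℕ → A) :
    ((t.subst (fun x : Empty => x.elim)).eval I α) = geval I t := by
  rw [eval_subst]
  show Tm.eval I _ t = Tm.eval I _ t
  congr 1
  funext x
  exact x.elim

theorem ctx_eval (I : (f : F) → (Fin (ar f) → A) → A) :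
    ∀ (q : List ℕ) (u w w2 u2 : Tm F ar Empty), u.subAt q = some w →
    u.replaceAt q w2 = some u2 → ∀ (l r : Tm F ar ℕ) (σ : ℕ → Tm F ar Empty),
    w = l.subst σ → w2 = r.subst σ →
    ∃ C : Ctx F ar ℕ, C.depth = q.length ∧
      (C.fill l).eval I (fun x => geval I (σ x)) = geval I u ∧
      (C.fill r).eval I (fun x => geval I (σ x)) = geval I u2
  | [], u, w, w2, u2, h1, h2, l, r, σ, hl, hr => by
      rw [subAt_nil] at h1; cases h1
      rw [replaceAt_nil] at h2; cases h2
      subst hl; subst hr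
      exact ⟨Ctx.hole, rfl, (eval_subst I (fun x : Empty => x.elim) σ l).symm,
        (eval_subst I (fun x : Empty => x.elim) σ r).symm⟩
  | i :: q, .var x, w, w2, u2, h1, h2, l, r, σ, hl, hr => nomatch x
  | i :: q, .app f ts, w, w2, u2, h1, h2, l, r, σ, hl, hr => by
      rcases subAt_app f ts i q w h1 with ⟨hi, hs⟩
      rcases replaceAt_app f ts i hi q w2 u2 h2 with ⟨ti, hti, rfl⟩
      rcases ctx_eval I q (ts ⟨i, hi⟩) w w2 ti hs hti l r σ hl hr with ⟨C, hd, he1, he2⟩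
      refine ⟨Ctx.app f ⟨i, hi⟩ (fun j _ => (ts j).subst (fun x : Empty => x.elim)) C,
        by simp [Ctx.depth, hd], ?_, ?_⟩
      · show I f _ = I f _
        congr 1
        funext j
        by_cases hj : j = ⟨i, hi⟩
        · subst hj; simp only [Ctx.fill, dif_pos]; exact he1
        · simp only [Ctx.fill, dif_neg hj]; exact eval_gr I (ts j) _
      · show I f _ = I f _
        congr 1
        funext j
        by_cases hj : j = ⟨i, hi⟩
        · subst hj
          simp only [Ctx.fill, dif_pos, Function.update_self]
          exact he2
        · simp only [Ctx.fill, dif_neg hj, Function.update_of_ne hj]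
          exact eval_gr I (ts j) _

end TRSStmt
namespace TRSStmt

variable {F : Type} {ar : F → ℕ} {V W U A : Type} {L : F → Type}

theorem prefix_cons_cases {i : ℕ} {p0 q : List ℕ} (h : q <+: i :: p0) :
    q = [] ∨ ∃ q0, q = i :: q0 ∧ q0 <+: p0 := by
  cases q with
  | nil => exact Or.inl rfl
  | cons a q0 =>
      rcases h with ⟨l, hl⟩
      simp only [List.cons_append, List.cons.injEq] at hl
      exact Or.inr ⟨q0, by rw [hl.1], ⟨l, hl.2⟩⟩

theorem propagate (I : (f : F) → (Fin (ar f) → A) → A)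
    (lf : ∀ f : F, (Fin (ar f) → A) → L f)
    (R : Set (Rule F ar ℕ)) (Sred : Set (LSym F L)) :
    ∀ (p : List ℕ) (s w w' t : Tm F ar Empty) (Y : Tm (DSym F L A) (dar ar) Empty),
    s.subAt p = some w → s.replaceAt p w' = some t →
    VC I lf R Sred (geval I w) (geval I w') →
    (∀ q u, q <+: p → q ≠ p → s.subAt q = some u →
      ¬ ∃ g ∈ Sred, (glab I lf u).rootSym = some g) →
    (embL (A := A) (glab I lf s)).replaceAt p
      (nabla (geval I w) (geval I w') (embL (A := A) (glab I lf w'))) = some Y →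
    ∃ m ≤ p.length, ∃ Z, itN (MuStep (DLprp I lf R Sred) (dlMu Sred)) m Y Z ∧
      ((geval I s = geval I t ∧ Z = embL (A := A) (glab I lf t) ∧
          ∀ q u u', q <+: p → s.subAt q = some u → t.subAt q = some u' →
            geval I u = geval I u' → m ≤ p.length - q.length)
       ∨ (VC I lf R Sred (geval I s) (geval I t) ∧
          Z = nabla (geval I s) (geval I t) (embL (A := A) (glab I lf t)) ∧
          m = p.length ∧
          ∀ q u u', q <+: p → s.subAt q = some u → t.subAt q = some u' →
            geval I u ≠ geval I u'))
  | [], s, w, w', t, Y, hsub, hrep, hvc, hq, hY => by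
      rw [subAt_nil] at hsub; cases hsub
      rw [replaceAt_nil] at hrep; cases hrep
      rw [replaceAt_nil] at hY; cases hY
      refine ⟨0, le_refl _, _, rfl, Or.inr ⟨hvc, rfl, rfl, ?_⟩⟩
      intro q u u' hpre hu hu'
      rcases hpre with ⟨l, hl⟩
      rcases List.append_eq_nil_iff.1 hl with ⟨rfl, rfl⟩
      rw [subAt_nil] at hu hu'; cases hu; cases hu'
      exact hvc.2
  | i :: p0, .var x, w, w', t, Y, hsub, hrep, hvc, hq, hY => nomatch x
  | i :: p0, .app f ts, w, w', t, Y, hsub, hrep, hvc, hq, hY => by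
      rcases subAt_app f ts i p0 w hsub with ⟨hi, hs⟩
      rcases replaceAt_app f ts i hi p0 w' t hrep with ⟨ti, hti, rfl⟩
      -- decompose Y
      rw [EG_app, replaceAt_cons (Sum.inl (⟨f, lf f fun j => geval I (ts j)⟩ : LSym F L))
        (fun j => embL (A := A) (glab I lf (ts j))) i hi] at hY
      rcases Option.map_eq_some_iff.1 hY with ⟨Yi, hYi, rfl⟩
      have hroot : (⟨f, lf f fun j => geval I (ts j)⟩ : LSym F L) ∉ Sred := by
        intro hmem
        exact hq [] (.app f ts) ⟨i :: p0, rfl⟩ (by simp) (subAt_nil _)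
          ⟨⟨f, lf f fun j => geval I (ts j)⟩, hmem, rfl⟩
      have hq' : ∀ q u, q <+: p0 → q ≠ p0 → (ts ⟨i, hi⟩).subAt q = some u →
          ¬ ∃ g ∈ Sred, (glab I lf u).rootSym = some g := by
        intro q u hpre hne hsq
        rcases hpre with ⟨l, rfl⟩
        refine hq (i :: q) u ⟨l, rfl⟩ (by simp [hne]) ?_
        rw [subAt_cons f ts i hi]; exact hsq
      rcases propagate I lf R Sred p0 (ts ⟨i, hi⟩) w w' ti Yi hs hti hvc hq' hYi
        with ⟨m, hm, Z', hsteps, houtcome⟩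
      have μroot : dlMu (A := A) (ar := ar) Sred
          (Sum.inl (⟨f, lf f fun j => geval I (ts j)⟩ : LSym F L)) ⟨i, hi⟩ := hroot
      have hlift := itN_MuStep_lift hsteps
        (Sum.inl (⟨f, lf f fun j => geval I (ts j)⟩ : LSym F L))
        (Function.update (fun j => embL (A := A) (glab I lf (ts j))) ⟨i, hi⟩ Yi)
        ⟨i, hi⟩ (Function.update_self _ _ _) μroot
      rw [Function.update_idem] at hlift
      -- common facts
      have upd_vals : (fun j => geval I (Function.update ts ⟨i, hi⟩ ti j))
          = Function.update (fun j => geval I (ts j)) ⟨i, hi⟩ (geval I ti) := by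
        funext j
        by_cases hj : j = ⟨i, hi⟩
        · subst hj; rw [Function.update_self, Function.update_self]
        · rw [Function.update_of_ne hj, Function.update_of_ne hj]
      have upd_ch : (fun j => embL (A := A) (glab I lf (Function.update ts ⟨i, hi⟩ ti j)))
          = Function.update (fun j => embL (A := A) (glab I lf (ts j))) ⟨i, hi⟩
              (embL (A := A) (glab I lf ti)) := by
        funext j
        by_cases hj : j = ⟨i, hi⟩
        · subst hj; rw [Function.update_self, Function.update_self]
        · rw [Function.update_of_ne hj, Function.update_of_ne hj]
      have hgs : geval I (Tm.app f ts) = I f (fun j => geval I (ts j)) := rfl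
      have hgt : geval I (Tm.app f (Function.update ts ⟨i, hi⟩ ti))
          = I f (Function.update (fun j => geval I (ts j)) ⟨i, hi⟩ (geval I ti)) := by
        rw [geval_app, upd_vals]
      rcases houtcome with ⟨heq, hZ', hbound⟩ | ⟨hVC', hZ', hmeq, hne⟩
      · -- child values stabilized: no more steps needed
        subst hZ'
        refine ⟨m, le_trans hm (Nat.le_succ _), _, hlift, Or.inl ⟨?_, ?_, ?_⟩⟩
        · rw [hgs, hgt, ← upd_vals]
          congr 1
          funext j
          by_cases hj : j = ⟨i, hi⟩
          · subst hj; rw [Function.update_self]; exact heq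
          · rw [Function.update_of_ne hj]
        · rw [EG_app, upd_vals, ← heq, Function.update_eq_self]
          exact congrArg (Tm.app (Sum.inl (⟨f, lf f fun j => geval I (ts j)⟩ : LSym F L)))
            upd_ch.symm
        · intro q u u' hpre hsq htq hequ
          rcases prefix_cons_cases hpre with rfl | ⟨q0, rfl, hpre0⟩
          · exact le_trans hm (by simp)
          · rw [subAt_cons f ts i hi] at hsq
            rw [subAt_cons f _ i hi, Function.update_self] at htq
            have := hbound q0 u u' hpre0 hsq htq hequ
            simpa [Nat.succ_sub_succ] using this
      · -- child still carries a ∇: one more relabeling step at the root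
        subst hZ'
        -- the relabeling rule instance
        set lhs : Tm (DSym F L A) (dar ar) ℕ :=
          Tm.app (Sum.inl (⟨f, lf f fun j => geval I (ts j)⟩ : LSym F L))
            (fun j => if j = ⟨i, hi⟩ then
                nabla (geval I (ts ⟨i, hi⟩)) (geval I ti) (Tm.var (j : ℕ))
              else Tm.var (j : ℕ)) with hlhs
        set σ' : ℕ → Tm (DSym F L A) (dar ar) Empty := fun n =>
          if h : n < ar f then
            (if (⟨n, h⟩ : Fin (ar f)) = ⟨i, hi⟩ then embL (A := A) (glab I lf ti)
             else embL (A := A) (glab I lf (ts ⟨n, h⟩)))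
          else embL (A := A) (glab I lf ti) with hσ'
        have hsubst_lhs : lhs.subst σ'
            = Tm.app (Sum.inl (⟨f, lf f fun j => geval I (ts j)⟩ : LSym F L))
                (Function.update (fun j => embL (A := A) (glab I lf (ts j))) ⟨i, hi⟩
                  (nabla (geval I (ts ⟨i, hi⟩)) (geval I ti)
                    (embL (A := A) (glab I lf ti)))) := by
          rw [hlhs]
          show Tm.app _ _ = _
          congr 1
          funext j
          by_cases hj : j = ⟨i, hi⟩
          · subst hj
            simp only [if_pos rfl, Function.update_self]
            show nabla _ _ (σ' _) = _
            congr 1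
            simp only [hσ']
            split
            · split
              · rfl
              · rename_i hcon; simp at hcon
            · rename_i h; exact absurd hi h
          · simp only [if_neg hj, Function.update_of_ne hj]
            show σ' _ = _
            simp only [hσ']
            split
            · rename_i h
              erw [if_neg (fun he => hj ((Fin.eta j h).symm.trans he)), Fin.eta j h]
            · rename_i h; exact absurd j.isLt h
        by_cases hval : I f (fun j => geval I (ts j))
            = I f (Function.update (fun j => geval I (ts j)) ⟨i, hi⟩ (geval I ti))
        · -- value stabilizes here
          set rhs : Tm (DSym F L A) (dar ar) ℕ :=
            Tm.app (Sum.inl (⟨f, lf f (Function.update (fun j => geval I (ts j)) ⟨i, hi⟩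
                (geval I ti))⟩ : LSym F L)) (fun j => Tm.var (j : ℕ)) with hrhs
          have hmem : (lhs, rhs) ∈ DLprp I lf R Sred := by
            refine ⟨f, (fun j => geval I (ts j)), ⟨i, hi⟩, geval I (ts ⟨i, hi⟩), geval I ti,
              hVC', rfl, hroot, rfl, Or.inl ⟨hval, rfl⟩⟩
          have hsubst_rhs : rhs.subst σ' = embL (A := A)
              (glab I lf (Tm.app f (Function.update ts ⟨i, hi⟩ ti))) := by
            rw [hrhs, EG_app, upd_vals]
            show Tm.app _ _ = _
            congr 1
            funext j
            show σ' _ = _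
            simp only [hσ']
            split
            · rename_i h
              by_cases hj : j = ⟨i, hi⟩
              · subst hj
                erw [Function.update_self]
                split
                · rfl
                · rename_i hcon; simp at hcon
              · erw [if_neg (fun he => hj ((Fin.eta j h).symm.trans he)), Fin.eta j h,
                  Function.update_of_ne hj]
            · rename_i h; exact absurd j.isLt h
          have hstep : MuStep (DLprp I lf R Sred) (dlMu Sred)
              (Tm.app (Sum.inl (⟨f, lf f fun j => geval I (ts j)⟩ : LSym F L))
                (Function.update (fun j => embL (A := A) (glab I lf (ts j))) ⟨i, hi⟩
                  (nabla (geval I (ts ⟨i, hi⟩)) (geval I ti)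
                    (embL (A := A) (glab I lf ti)))))
              (embL (A := A) (glab I lf (Tm.app f (Function.update ts ⟨i, hi⟩ ti)))) := by
            refine ⟨[], ⟨(lhs, rhs), hmem, σ', ?_, ?_⟩, MuPos.nil _⟩
            · rw [subAt_nil, hsubst_lhs]
            · rw [replaceAt_nil, hsubst_rhs]
          refine ⟨m + 1, by simpa using Nat.succ_le_succ hm, _,
            itN_snoc hlift hstep, Or.inl ⟨?_, rfl, ?_⟩⟩
          · rw [hgs, hgt]; exact hval
          · intro q u u' hpre hsq htq hequ
            rcases prefix_cons_cases hpre with rfl | ⟨q0, rfl, hpre0⟩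
            · simpa using hm
            · rw [subAt_cons f ts i hi] at hsq
              rw [subAt_cons f _ i hi, Function.update_self] at htq
              exact absurd hequ (hne q0 u u' hpre0 hsq htq)
        · -- value still changes: emit a new ∇ above
          set rhs : Tm (DSym F L A) (dar ar) ℕ :=
            nabla (I f (fun j => geval I (ts j)))
              (I f (Function.update (fun j => geval I (ts j)) ⟨i, hi⟩ (geval I ti)))
              (Tm.app (Sum.inl (⟨f, lf f (Function.update (fun j => geval I (ts j)) ⟨i, hi⟩
                (geval I ti))⟩ : LSym F L)) (fun j => Tm.var (j : ℕ))) with hrhs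
          have hmem : (lhs, rhs) ∈ DLprp I lf R Sred := by
            refine ⟨f, (fun j => geval I (ts j)), ⟨i, hi⟩, geval I (ts ⟨i, hi⟩), geval I ti,
              hVC', rfl, hroot, rfl, Or.inr ⟨hval, rfl⟩⟩
          have hsubst_rhs : rhs.subst σ'
              = nabla (geval I (Tm.app f ts))
                  (geval I (Tm.app f (Function.update ts ⟨i, hi⟩ ti)))
                  (embL (A := A)
                    (glab I lf (Tm.app f (Function.update ts ⟨i, hi⟩ ti)))) := by
            rw [hrhs, nabla_subst, hgs, hgt]
            congr 1
            rw [EG_app, upd_vals]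
            show Tm.app _ _ = _
            congr 1
            funext j
            show σ' _ = _
            simp only [hσ']
            split
            · rename_i h
              by_cases hj : j = ⟨i, hi⟩
              · subst hj
                erw [Function.update_self]
                split
                · rfl
                · rename_i hcon; simp at hcon
              · erw [if_neg (fun he => hj ((Fin.eta j h).symm.trans he)), Fin.eta j h,
                  Function.update_of_ne hj]
            · rename_i h; exact absurd j.isLt h
          have hstep : MuStep (DLprp I lf R Sred) (dlMu Sred)
              (Tm.app (Sum.inl (⟨f, lf f fun j => geval I (ts j)⟩ : LSym F L))
                (Function.update (fun j => embL (A := A) (glab I lf (ts j))) ⟨i, hi⟩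
                  (nabla (geval I (ts ⟨i, hi⟩)) (geval I ti)
                    (embL (A := A) (glab I lf ti)))))
              (nabla (geval I (Tm.app f ts))
                (geval I (Tm.app f (Function.update ts ⟨i, hi⟩ ti)))
                (embL (A := A)
                  (glab I lf (Tm.app f (Function.update ts ⟨i, hi⟩ ti))))) := by
            refine ⟨[], ⟨(lhs, rhs), hmem, σ', ?_, ?_⟩, MuPos.nil _⟩
            · rw [subAt_nil, hsubst_lhs]
            · rw [replaceAt_nil, hsubst_rhs]
          have hvcnew : VC I lf R Sred (geval I (Tm.app f ts))
              (geval I (Tm.app f (Function.update ts ⟨i, hi⟩ ti))) := by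
            constructor
            · rw [hgs, hgt]
              exact VCpre.step _ _ hVC'.1 f (fun j => geval I (ts j)) ⟨i, hi⟩ rfl hroot
            · rw [hgs, hgt]; exact hval
          refine ⟨m + 1, by simpa using Nat.succ_le_succ hm, _,
            itN_snoc hlift hstep, Or.inr ⟨hvcnew, rfl, by simp [hmeq], ?_⟩⟩
          intro q u u' hpre hsq htq
          rcases prefix_cons_cases hpre with rfl | ⟨q0, rfl, hpre0⟩
          · rw [subAt_nil] at hsq htq; cases hsq; cases htq
            rw [hgs, hgt]; exact hval
          · rw [subAt_cons f ts i hi] at hsq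
            rw [subAt_cons f _ i hi, Function.update_self] at htq
            exact hne q0 u u' hpre0 hsq htq

end TRSStmt
namespace TRSStmt

theorem itN_map {τ τ' : Type _} {r : τ → τ → Prop} {r' : τ' → τ' → Prop}
    (φ : τ → τ') (hφ : ∀ a b, r a b → r' (φ a) (φ b)) :
    ∀ {m a b}, itN r m a b → itN r' m (φ a) (φ b) := by
  intro m
  induction m with
  | zero => intro a b h; cases h; rfl
  | succ n ih => rintro a b ⟨c, hc, hrest⟩; exact ⟨φ c, hφ _ _ hc, ih hrest⟩

theorem itN_path {τ : Type _} (r : τ → τ → Prop) :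
    ∀ (m : ℕ) (a b : τ), itN r m a b →
    ∃ ρ : ℕ → τ, ρ 0 = a ∧ ρ m = b ∧ ∀ k < m, r (ρ k) (ρ (k + 1)) := by
  intro m
  induction m with
  | zero =>
      intro a b h; cases h
      exact ⟨fun _ => a, rfl, rfl, fun k hk => absurd hk (Nat.not_lt_zero k)⟩
  | succ n ih =>
      rintro a b ⟨c, hc, hrest⟩
      rcases ih c b hrest with ⟨ρ', h0, hend, hsteps⟩
      refine ⟨fun k => Nat.casesOn k a ρ', rfl, hend, ?_⟩
      intro k hk
      cases k with
      | zero => simpa [h0] using hc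
      | succ k => exact hsteps k (Nat.lt_of_succ_lt_succ hk)

theorem concat_chains {τ : Type _} (r : τ → τ → Prop) (h : ℕ → τ)
    (hm : ∀ n, ∃ m, itN r (m + 1) (h n) (h (n + 1))) :
    ∃ g : ℕ → τ, ∀ k, r (g k) (g (k + 1)) := by
  choose m hm' using hm
  choose ρ hρ0 hρend hρstep using fun n => itN_path r _ _ _ (hm' n)
  set st : ℕ → ℕ × ℕ := fun k =>
    Nat.rec (0, 0) (fun _ s => if s.2 + 1 < m s.1 + 1 then (s.1, s.2 + 1) else (s.1 + 1, 0)) k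
    with hst
  have hst0 : st 0 = (0, 0) := rfl
  have hstsucc : ∀ k, st (k + 1)
      = if (st k).2 + 1 < m (st k).1 + 1 then ((st k).1, (st k).2 + 1)
        else ((st k).1 + 1, 0) := fun k => rfl
  have hinv : ∀ k, (st k).2 < m (st k).1 + 1 := by
    intro k
    induction k with
    | zero => simp [hst0]
    | succ k ih =>
        rw [hstsucc k]
        split
        · rename_i hlt; exact hlt
        · exact Nat.succ_pos _
  refine ⟨fun k => ρ (st k).1 (st k).2, ?_⟩
  intro k
  show r (ρ (st k).1 (st k).2) (ρ (st (k + 1)).1 (st (k + 1)).2)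
  rw [hstsucc k]
  split
  · rename_i hlt
    exact hρstep (st k).1 (st k).2 (Nat.lt_of_succ_lt hlt)
  · rename_i hge
    have hj : (st k).2 + 1 = m (st k).1 + 1 := by
      have := hinv k
      omega
    show r (ρ (st k).1 (st k).2) (ρ ((st k).1 + 1) 0)
    rw [hρ0 ((st k).1 + 1), ← hρend (st k).1, ← hj]
    exact hρstep (st k).1 (st k).2 (by omega)

end TRSStmt
namespace TRSStmt

variable {F : Type} {ar : F → ℕ} {V W U A : Type} {L : F → Type}

theorem simulate (I : (f : F) → (Fin (ar f) → A) → A)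
    (lf : ∀ f : F, (Fin (ar f) → A) → L f)
    (tp : F) (htp : ar tp = 1)
    (htpconst : ∀ as as' : Fin (ar tp) → A, I tp as = I tp as')
    (R : Set (Rule F ar ℕ))
    (Sred : Set (LSym F L)) (hSred : ∀ g ∈ Sred, g.1 ≠ tp)
    (hsound : SoundLab I lf tp R Sred)
    (N : ℕ) (hN : ∀ lr ∈ R, HoldsAtDepth I N lr) :
    ∀ s t : Tm F ar Empty, tpFree tp s → OStep R s t →
    ∃ m ≤ N, ∃ u : Tm (DSym F L A) (dar ar) Empty,
      MuStep (DLorg I lf R) (dlMu Sred) (embL (glab I lf (topT tp s))) u ∧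
      itN (MuStep (DLprp I lf R Sred) (dlMu Sred)) m u
        (embL (glab I lf (topT tp t))) := by
  intro s t hfree hstep
  rcases hstep with ⟨p, ⟨lr, hlr, σ, hsubp, hrepp⟩, hout⟩
  have hi0 : (0 : ℕ) < ar tp := by rw [htp]; exact Nat.zero_lt_one
  have huniq : ∀ j : Fin (ar tp), j = ⟨0, hi0⟩ := by
    intro j
    apply Fin.ext
    have h1 : (j : ℕ) < 1 := by rw [← htp]; exact j.isLt
    show (j : ℕ) = (0 : ℕ)
    omega
  have hSsub : (topT tp s).subAt (0 :: p) = some (lr.1.subst σ) := by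
    show (Tm.app tp (fun _ => s)).subAt (0 :: p) = _
    rw [subAt_cons tp (fun _ => s) 0 hi0]
    exact hsubp
  have hupdate : Function.update (fun _ : Fin (ar tp) => s) ⟨0, hi0⟩ t = fun _ => t := by
    funext j; rw [huniq j, Function.update_self]
  have hSrep : (topT tp s).replaceAt (0 :: p) (lr.2.subst σ) = some (topT tp t) := by
    show (Tm.app tp (fun _ => s)).replaceAt (0 :: p) _ = _
    rw [replaceAt_cons tp (fun _ => s) 0 hi0]
    show Option.map _ (s.replaceAt p _) = _
    rw [hrepp]
    simp only [Option.map_some, Option.some.injEq]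
    show Tm.app tp (Function.update (fun _ : Fin (ar tp) => s) ⟨0, hi0⟩ t) = topT tp t
    rw [hupdate]
    rfl
  have NS : ∀ q u, q <+: (0 :: p) → q ≠ (0 :: p) → (topT tp s).subAt q = some u →
      ¬ ∃ g ∈ Sred, (glab I lf u).rootSym = some g := by
    intro q u hpre hne hsq
    rcases prefix_cons_cases hpre with rfl | ⟨q0, rfl, hpre0⟩
    · rw [subAt_nil] at hsq; cases hsq
      rintro ⟨g, hg, hgr⟩
      have hgr' : some (⟨tp, lf tp fun j => geval I ((fun _ : Fin (ar tp) => s) j)⟩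
          : LSym F L) = some g := hgr
      injection hgr' with h
      exact hSred g hg (congrArg Sigma.fst h).symm
    · have hq0ne : q0 ≠ p := by intro hq; apply hne; rw [hq]
      have hsq' : s.subAt q0 = some u := by
        have h2 : (Tm.app tp (fun _ : Fin (ar tp) => s)).subAt (0 :: q0) = some u := hsq
        rw [subAt_cons tp _ 0 hi0] at h2
        exact h2
      have hnored := hout q0 hpre0 hq0ne u hsq'
      rintro ⟨g, hg, hgr⟩
      exact hnored (hsound u (tpFree_subAt tp q0 s u hfree hsq') g hg hgr)
  have hμpos := MuPos_EG I lf Sred (0 :: p) (topT tp s) _ hSsub NS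
  have hceq : geval I (lr.1.subst σ) = lr.1.eval I (fun x => geval I (σ x)) :=
    eval_subst I (fun x : Empty => x.elim) σ lr.1
  have hceq2 : geval I (lr.2.subst σ) = lr.2.eval I (fun x => geval I (σ x)) :=
    eval_subst I (fun x : Empty => x.elim) σ lr.2
  have hlhs : embL (A := A) (glab I lf (lr.1.subst σ))
      = (embL (A := A) (labT I lf (fun x => geval I (σ x)) lr.1)).subst
          (fun x => embL (A := A) (glab I lf (σ x))) := by
    show embL (A := A) (labT I lf (fun x : Empty => x.elim) (lr.1.subst σ)) = _
    rw [labT_subst, embL_subst]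
    rfl
  have hrhs : embL (A := A) (glab I lf (lr.2.subst σ))
      = (embL (A := A) (labT I lf (fun x => geval I (σ x)) lr.2)).subst
          (fun x => embL (A := A) (glab I lf (σ x))) := by
    show embL (A := A) (labT I lf (fun x : Empty => x.elim) (lr.2.subst σ)) = _
    rw [labT_subst, embL_subst]
    rfl
  by_cases hc : lr.1.eval I (fun x => geval I (σ x)) = lr.2.eval I (fun x => geval I (σ x))
  · -- no value change: single original step suffices
    have hgeq : geval I (lr.1.subst σ) = geval I (lr.2.subst σ) := by
      rw [hceq, hceq2]; exact hc
    have hmem : (embL (A := A) (labT I lf (fun x => geval I (σ x)) lr.1),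
        embL (A := A) (labT I lf (fun x => geval I (σ x)) lr.2)) ∈ DLorg I lf R :=
      ⟨lr, hlr, fun x => geval I (σ x), rfl, Or.inl ⟨hc, rfl⟩⟩
    refine ⟨0, Nat.zero_le N, embL (glab I lf (topT tp t)),
      ⟨0 :: p, ⟨_, hmem, fun x => embL (A := A) (glab I lf (σ x)), ?_, ?_⟩, hμpos⟩, rfl⟩
    · rw [← hlhs]
      exact EG_subAt I lf (0 :: p) _ _ hSsub
    · rw [← hrhs]
      exact EG_replace_eq I lf (0 :: p) _ _ _ _ hSsub hSrep hgeq
  · -- value change: emit a ∇ and propagate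
    have hgne : geval I (lr.1.subst σ) ≠ geval I (lr.2.subst σ) := by
      rw [hceq, hceq2]; exact hc
    have hvc : VC I lf R Sred (geval I (lr.1.subst σ)) (geval I (lr.2.subst σ)) := by
      refine ⟨?_, hgne⟩
      rw [hceq, hceq2]
      exact VCpre.base lr hlr _ hc
    have hmem : (embL (A := A) (labT I lf (fun x => geval I (σ x)) lr.1),
        nabla (lr.1.eval I (fun x => geval I (σ x))) (lr.2.eval I (fun x => geval I (σ x)))
          (embL (A := A) (labT I lf (fun x => geval I (σ x)) lr.2))) ∈ DLorg I lf R :=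
      ⟨lr, hlr, fun x => geval I (σ x), rfl, Or.inr ⟨hc, rfl⟩⟩
    obtain ⟨Y, hY⟩ := EG_replace_exists I lf (0 :: p) (topT tp s) _ hSsub
      (nabla (geval I (lr.1.subst σ)) (geval I (lr.2.subst σ))
        (embL (A := A) (glab I lf (lr.2.subst σ))))
    have hrhs_subst : (nabla (lr.1.eval I (fun x => geval I (σ x)))
        (lr.2.eval I (fun x => geval I (σ x)))
        (embL (A := A) (labT I lf (fun x => geval I (σ x)) lr.2))).subst
          (fun x => embL (A := A) (glab I lf (σ x)))
        = nabla (geval I (lr.1.subst σ)) (geval I (lr.2.subst σ))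
            (embL (A := A) (glab I lf (lr.2.subst σ))) := by
      rw [nabla_subst, ← hrhs, hceq, hceq2]
    have hstep1 : MuStep (DLorg I lf R) (dlMu Sred)
        (embL (A := A) (glab I lf (topT tp s))) Y := by
      refine ⟨0 :: p, ⟨_, hmem, fun x => embL (A := A) (glab I lf (σ x)), ?_, ?_⟩, hμpos⟩
      · rw [← hlhs]
        exact EG_subAt I lf (0 :: p) _ _ hSsub
      · rw [hrhs_subst]
        exact hY
    rcases propagate I lf R Sred (0 :: p) (topT tp s) _ _ (topT tp t) Y hSsub hSrep hvc NS hY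
      with ⟨m, hmlen, Z, hsteps, outcome⟩
    have hSval : geval I (topT tp s) = geval I (topT tp t) := htpconst _ _
    rcases outcome with ⟨_, hZ, hbound⟩ | ⟨hvc', _, _, _⟩
    · subst hZ
      by_cases hlen : (0 :: p).length ≤ N
      · have hb := hbound [] _ _ ⟨0 :: p, rfl⟩ (subAt_nil _) (subAt_nil _) hSval
        exact ⟨m, le_trans (by simpa using hb) hlen, Y, hstep1, hsteps⟩
      · push_neg at hlen
        have hql : ((0 :: p).take ((0 :: p).length - N)).length = (0 :: p).length - N := by
          rw [List.length_take]; omega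
        have happ : (0 :: p).take ((0 :: p).length - N)
            ++ (0 :: p).drop ((0 :: p).length - N) = 0 :: p := List.take_append_drop _ _
        have hq'l : ((0 :: p).drop ((0 :: p).length - N)).length = N := by
          rw [List.length_drop]; omega
        obtain ⟨U, hU, hUq'⟩ := subAt_append _ _ (topT tp s) _ (by rw [happ]; exact hSsub)
        obtain ⟨U', hU'1, hTU'⟩ := replaceAt_append _ _ (topT tp s) U _ _ hU
          (by rw [happ]; exact hSrep)
        obtain ⟨C, hCd, he1, he2⟩ := ctx_eval I _ U _ _ U' hUq' hU'1 lr.1 lr.2 σ rfl rfl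
        have hvaleq : geval I U = geval I U' := by
          rw [← he1, ← he2]
          exact hN lr hlr C _ (by rw [hCd, hq'l])
        have hb := hbound _ U U' (List.take_prefix _ _) hU hTU' hvaleq
        refine ⟨m, ?_, Y, hstep1, hsteps⟩
        rw [hql] at hb
        omega
    · exact absurd hSval hvc'.2

end TRSStmt
namespace Stmt

open TRSStmt

/-- Lemma 6.10 and Theorem 6.11: with a sound C-labeling, every outermost
    ground step of `R` is simulated in the dynamic labeling `DL(A,λ,R)` by one μ-step
    with a labeled original rule followed by at most `cd_A(R)` relabeling μ-steps;
    consequently, termination of `DL(A,λ,R)` implies outermost ground termination of `R`. -/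
theorem dl_sound {F : Type} {ar : F → ℕ} {A : Type} {L : F → Type}
    (I : (f : F) → (Fin (ar f) → A) → A)
    (lf : ∀ f : F, (Fin (ar f) → A) → L f)
    (tp : F) (htp : ar tp = 1)
    (htpconst : ∀ as as' : Fin (ar tp) → A, I tp as = I tp as')
    (R : Set (Rule F ar ℕ)) (hTRS : IsTRS R) (hfin : R.Finite)
    (hRtp : ∀ lr ∈ R, tpFree tp lr.1 ∧ tpFree tp lr.2)
    (Sred : Set (LSym F L)) (hSred : ∀ g ∈ Sred, g.1 ≠ tp)
    (hsound : SoundLab I lf tp R Sred)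
    (N : ℕ) (hN : ∀ lr ∈ R, HoldsAtDepth I N lr) :
    (∀ s t : Tm F ar Empty, tpFree tp s → tpFree tp t → OStep R s t →
      ∃ m ≤ N, ∃ u : Tm (DSym F L A) (dar ar) Empty,
        MuStep (DLorg I lf R) (dlMu Sred) (embL (glab I lf (topT tp s))) u ∧
        itN (MuStep (DLprp I lf R Sred) (dlMu Sred)) m u
          (embL (glab I lf (topT tp t)))) ∧
    (NoInf (MuStep (DLorg I lf R ∪ DLprp I lf R Sred) (dlMu Sred) :
        Tm (DSym F L A) (dar ar) ℕ → Tm (DSym F L A) (dar ar) ℕ → Prop) →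
      OGTtp R tp) := by
  have sim := simulate I lf tp htp htpconst R Sred hSred hsound N hN
  constructor
  · intro s t hs _ hstep
    exact sim s t hs hstep
  · intro hterm
    rintro ⟨g, hfree, hstep⟩
    have hblocks : ∀ n, ∃ m,
        itN (MuStep (DLorg I lf R ∪ DLprp I lf R Sred) (dlMu Sred)) (m + 1)
          ((embL (A := A) (glab I lf (topT tp (g n)))).subst
            (fun x : Empty => (x.elim : Tm (DSym F L A) (dar ar) ℕ)))
          ((embL (A := A) (glab I lf (topT tp (g (n + 1))))).subst
            (fun x : Empty => (x.elim : Tm (DSym F L A) (dar ar) ℕ))) := by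
      intro n
      rcases sim (g n) (g (n + 1)) (hfree n) (hstep n) with ⟨m, _, u, h1, h2⟩
      refine ⟨m, u.subst (fun x : Empty => (x.elim : Tm (DSym F L A) (dar ar) ℕ)), ?_, ?_⟩
      · exact MuStep_subst _ (MuStep_mono Set.subset_union_left h1)
      · exact itN_map (fun a => a.subst (fun x : Empty => (x.elim : Tm (DSym F L A) (dar ar) ℕ)))
          (fun a b hab => MuStep_subst _ (MuStep_mono Set.subset_union_right hab)) h2
    rcases concat_chains _ _ hblocks with ⟨g', hg'⟩
    exact hterm ⟨g', hg'⟩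

end Stmt
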